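/- Let e(n) = deg B_n(t) be the degree of the n-th Stern polynomial. Then for every natural number n, the smallest positive integer i with e(i) = n is i = 2^n, and the largest positive integer i with e(i) = n is i = (4^{n+1} - 1)/3. -/

import Mathlib

open Polynomial

/-- The Stern polynomials: `B 0 = 0`, `B 1 = 1`, `B (2n) = t * B n`,
`B (2n+1) = B n + B (n+1)`. -/
noncomputable def stern : ℕ → Polynomial ℤ
  | 0 => 0
  | 1 => 1
  | n + 2 =>
    if _h : n % 2 = 0 then
      X * stern (n / 2 + 1)
    else
      stern (n / 2 + 1) + stern (n / 2 + 2)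
  decreasing_by all_goals omega

/-- `e n` is the degree of the `n`-th Stern polynomial. -/
noncomputable def e (n : ℕ) : ℕ := (stern n).natDegree

lemma stern_zero : stern 0 = 0 := by rw [stern]
lemma stern_one : stern 1 = 1 := by rw [stern]
lemma stern_two_mul (n : ℕ) (h : 1 ≤ n) : stern (2*n) = X * stern n := by
  obtain ⟨m, rfl⟩ := Nat.exists_eq_add_of_le h
  have : 2 * (1 + m) = 2*m + 2 := by ring
  rw [this, stern]
  rw [dif_pos (by omega : (2*m) % 2 = 0)]
  congr 2
  omega
lemma stern_two_mul_add_one (n : ℕ) (h : 1 ≤ n) :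
    stern (2*n+1) = stern n + stern (n+1) := by
  obtain ⟨m, rfl⟩ := Nat.exists_eq_add_of_le h
  have : 2 * (1 + m) + 1 = (2*m + 1) + 2 := by ring
  rw [this, stern]
  rw [dif_neg (by omega : ¬ ((2*m+1) % 2 = 0))]
  have e1 : (2*m+1)/2 + 1 = 1 + m := by omega
  have e2 : (2*m+1)/2 + 2 = 1 + m + 1 := by omega
  rw [e1, e2]

lemma stern_coeff_nonneg (n : ℕ) : ∀ k, 0 ≤ (stern n).coeff k := by
  induction n using Nat.strong_induction_on with
  | _ n ih =>
    intro k
    match n, ih with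
    | 0, ih => simp [stern_zero]
    | 1, ih => rw [stern_one]; rcases k with _ | k <;> simp [coeff_one]
    | (n+2), ih =>
      rcases Nat.even_or_odd (n+2) with ⟨m, hm⟩ | ⟨m, hm⟩
      · have hm1 : 1 ≤ m := by omega
        have : n + 2 = 2 * m := by omega
        rw [this, stern_two_mul m hm1]
        rcases k with _ | k
        · simp
        · rw [coeff_X_mul]
          exact ih m (by omega) k
      · have hm1 : 1 ≤ m := by omega
        have : n + 2 = 2 * m + 1 := by omega
        rw [this, stern_two_mul_add_one m hm1, coeff_add]
        have := ih m (by omega) k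
        have := ih (m+1) (by omega) k
        linarith

lemma stern_ne_zero (n : ℕ) (h : 1 ≤ n) : stern n ≠ 0 := by
  induction n using Nat.strong_induction_on with
  | _ n ih =>
    match n, h, ih with
    | 1, h, ih => rw [stern_one]; exact one_ne_zero
    | (n+2), h, ih =>
      rcases Nat.even_or_odd (n+2) with ⟨m, hm⟩ | ⟨m, hm⟩
      · have hm1 : 1 ≤ m := by omega
        have : n + 2 = 2 * m := by omega
        rw [this, stern_two_mul m hm1]
        exact mul_ne_zero X_ne_zero (ih m (by omega) hm1)
      · have hm1 : 1 ≤ m := by omega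
        have hne : stern m ≠ 0 := ih m (by omega) hm1
        have : n + 2 = 2 * m + 1 := by omega
        rw [this, stern_two_mul_add_one m hm1]
        intro hc
        have hco : ((stern m) + stern (m+1)).coeff ((stern m).natDegree) = 0 := by
          rw [hc]; simp
        rw [coeff_add] at hco
        have h1 : 0 < (stern m).coeff ((stern m).natDegree) := by
          have := stern_coeff_nonneg m ((stern m).natDegree)
          have h2 : (stern m).coeff ((stern m).natDegree) ≠ 0 := by
            rw [← leadingCoeff]; exact leadingCoeff_ne_zero.mpr hne
          omega
        have h2 := stern_coeff_nonneg (m+1) ((stern m).natDegree)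
        omega

lemma natDegree_add_max (p q : Polynomial ℤ) (hp : p ≠ 0) (hq : q ≠ 0)
    (hpc : ∀ k, 0 ≤ p.coeff k) (hqc : ∀ k, 0 ≤ q.coeff k) :
    (p + q).natDegree = max p.natDegree q.natDegree := by
  apply le_antisymm (natDegree_add_le p q)
  set D := max p.natDegree q.natDegree with hD
  apply le_natDegree_of_ne_zero
  rw [coeff_add]
  rcases le_total p.natDegree q.natDegree with hle | hle
  · have hDq : D = q.natDegree := by omega
    have h1 : 0 < q.coeff D := by
      have h2 : q.coeff D ≠ 0 := by
        rw [hDq, ← leadingCoeff]; exact leadingCoeff_ne_zero.mpr hq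
      have := hqc D; omega
    have := hpc D; omega
  · have hDp : D = p.natDegree := by omega
    have h1 : 0 < p.coeff D := by
      have h2 : p.coeff D ≠ 0 := by
        rw [hDp, ← leadingCoeff]; exact leadingCoeff_ne_zero.mpr hp
      have := hpc D; omega
    have := hqc D; omega

lemma e_zero : e 0 = 0 := by simp [e, stern_zero]
lemma e_one : e 1 = 0 := by simp [e, stern_one]
lemma e_two_mul (n : ℕ) (h : 1 ≤ n) : e (2*n) = e n + 1 := by
  unfold e
  rw [stern_two_mul n h, natDegree_mul X_ne_zero (stern_ne_zero n h), natDegree_X]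
  omega
lemma e_odd (n : ℕ) : e (2*n+1) = max (e n) (e (n+1)) := by
  rcases Nat.eq_zero_or_pos n with rfl | h
  · simp [e_zero, e_one]
  · unfold e
    rw [stern_two_mul_add_one n h]
    exact natDegree_add_max _ _ (stern_ne_zero n h) (stern_ne_zero (n+1) (by omega))
      (stern_coeff_nonneg n) (stern_coeff_nonneg (n+1))
lemma e_two : e 2 = 1 := by
  have := e_two_mul 1 le_rfl; rw [e_one] at this; simpa using this

lemma e_pow (n : ℕ) : e (2^n) = n := by
  induction n with
  | zero => simpa using e_one
  | succ k ih =>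
    have : 2^(k+1) = 2 * 2^k := by ring
    rw [this, e_two_mul (2^k) (Nat.one_le_two_pow), ih]

lemma pow2_le (i : ℕ) (h : 1 ≤ i) : 2^(e i) ≤ i := by
  induction i using Nat.strong_induction_on with
  | _ i ih =>
    match i, h, ih with
    | 1, h, ih => simp [e_one]
    | (n+2), h, ih =>
      rcases Nat.even_or_odd (n+2) with ⟨m, hm⟩ | ⟨m, hm⟩
      · have hm1 : 1 ≤ m := by omega
        have hi : n + 2 = 2 * m := by omega
        rw [hi, e_two_mul m hm1, pow_succ]
        have := ih m (by omega) hm1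
        omega
      · have hm1 : 1 ≤ m := by omega
        have hi : n + 2 = 2 * m + 1 := by omega
        rw [hi, e_odd m]
        have h1 := ih m (by omega) hm1
        have h2 := ih (m+1) (by omega) (by omega)
        rcases max_cases (e m) (e (m+1)) with ⟨hmax, _⟩ | ⟨hmax, _⟩ <;> rw [hmax] <;> omega

lemma key3 (n : ℕ) : 3 * ((4^(n+1) - 1)/3) + 1 = 4^(n+1) := by
  have h1 : 4^(n+1) % 3 = 1 := by
    rw [Nat.pow_mod]; norm_num
  have h2 : 1 ≤ 4^(n+1) := Nat.one_le_pow _ _ (by norm_num)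
  omega

lemma e_M (n : ℕ) : e ((4^(n+1) - 1)/3) = n ∧ e ((4^(n+1) - 1)/3 + 1) = n + 1 := by
  induction n with
  | zero =>
    constructor
    · norm_num [e_one]
    · norm_num [e_two]
  | succ k ih =>
    obtain ⟨ih1, ih2⟩ := ih
    set m := (4^(k+1) - 1)/3 with hmdef
    have hk := key3 k
    have hk2 := key3 (k+1)
    have hm1 : 1 ≤ m := by
      have : (4:ℕ) ≤ 4^(k+1) := by
        calc (4:ℕ) = 4^1 := by norm_num
        _ ≤ 4^(k+1) := Nat.pow_le_pow_right (by norm_num) (by omega)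
      omega
    have hM : (4^(k+1+1) - 1)/3 = 2 * (2 * m) + 1 := by
      have : 4^(k+1+1) = 4 * 4^(k+1) := by ring
      omega
    have hE2m : e (2*m) = k + 1 := by rw [e_two_mul m hm1, ih1]
    have hE2m1 : e (2*m+1) = k + 1 := by
      rw [e_odd m, ih1, ih2]; omega
    constructor
    · rw [hM, e_odd (2*m), hE2m, hE2m1]; omega
    · have hM1 : (4^(k+1+1) - 1)/3 + 1 = 2 * (2 * m + 1) := by omega
      rw [hM1, e_two_mul (2*m+1) (by omega), hE2m1]

lemma PQ (i : ℕ) : (1 ≤ i → 3*i+1 ≤ 4^(e i + 1)) ∧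
    (1 ≤ i → 6*i+4 ≤ 4^(max (e i) (e (i+1)) + 1)) := by
  induction i using Nat.strong_induction_on with
  | _ i ih =>
    have pow4mono : ∀ a b : ℕ, a ≤ b → (4:ℕ)^a ≤ 4^b :=
      fun a b h => Nat.pow_le_pow_right (by norm_num) h
    constructor
    · intro hi
      match i, hi, ih with
      | 1, hi, ih => simp [e_one]
      | (n+2), hi, ih =>
        rcases Nat.even_or_odd (n+2) with ⟨m, hm⟩ | ⟨m, hm⟩
        · have hm1 : 1 ≤ m := by omega
          have hie : n + 2 = 2 * m := by omega
          rw [hie, e_two_mul m hm1]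
          have h1 := (ih m (by omega)).1 hm1
          have h2 : (4:ℕ)^(e m + 1 + 1) = 4 * 4^(e m + 1) := by ring
          omega
        · have hm1 : 1 ≤ m := by omega
          have hie : n + 2 = 2 * m + 1 := by omega
          rw [hie, e_odd m]
          have h1 := (ih m (by omega)).2 hm1
          omega
    · intro hi
      rcases Nat.lt_or_ge i 2 with h2 | h2
      · -- i = 1
        have : i = 1 := by omega
        subst this
        simp [e_one, e_two]
      · rcases Nat.even_or_odd i with ⟨m, hm⟩ | ⟨m, hm⟩
        · -- i = 2m, m ≥ 1
          have hm1 : 1 ≤ m := by omega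
          have hie : i = 2 * m := by omega
          rw [hie, e_two_mul m hm1, e_odd m]
          have hP := (ih m (by omega)).1 hm1
          rcases le_or_gt (e (m+1)) (e m + 1) with hb | hb
          · have hmax : max (e m + 1) (max (e m) (e (m+1))) = e m + 1 := by omega
            rw [hmax]
            have h4 : (4:ℕ)^(e m+1+1) = 4 * 4^(e m+1) := by ring
            omega
          · have hmax : max (e m + 1) (max (e m) (e (m+1))) = e (m+1) := by omega
            rw [hmax]
            have h4 : (4:ℕ)^(e m+3) ≤ 4^(e (m+1)+1) := pow4mono _ _ (by omega)
            have h5 : (4:ℕ)^(e m+3) = 16 * 4^(e m+1) := by ring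
            omega
        · -- i = 2m+1, m ≥ 1
          have hm1 : 1 ≤ m := by omega
          have hie : i = 2 * m + 1 := by omega
          rw [hie]
          have hie1 : 2 * m + 1 + 1 = 2 * (m + 1) := by omega
          rw [hie1, e_odd m, e_two_mul (m+1) (by omega)]
          have hP := (ih (m+1) (by omega)).1 (by omega)
          have h4 : (4:ℕ)^(e (m+1)+1+1) ≤ 4^(max (max (e m) (e (m+1))) (e (m+1)+1) + 1) :=
            pow4mono _ _ (by omega)
          have h5 : (4:ℕ)^(e (m+1)+1+1) = 4 * 4^(e (m+1)+1) := by ring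
          omega

theorem stern_degree_least_greatest_index (n : ℕ) :
    IsLeast {i : ℕ | 1 ≤ i ∧ e i = n} (2 ^ n) ∧
    IsGreatest {i : ℕ | 1 ≤ i ∧ e i = n} ((4 ^ (n + 1) - 1) / 3) := by
  constructor
  · constructor
    · exact ⟨Nat.one_le_two_pow, e_pow n⟩
    · rintro i ⟨hi1, hie⟩
      have := pow2_le i hi1
      rw [hie] at this
      exact this
  · constructor
    · refine ⟨?_, (e_M n).1⟩
      have := key3 n
      have h4 : (4:ℕ) ≤ 4^(n+1) := by
        calc (4:ℕ) = 4^1 := by norm_num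
        _ ≤ 4^(n+1) := Nat.pow_le_pow_right (by norm_num) (by omega)
      omega
    · rintro i ⟨hi1, hie⟩
      have hP := (PQ i).1 hi1
      rw [hie] at hP
      have := key3 n
      omega
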